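/- Let d ≥ 2 and let a_1,…,a_d be positive integers. Then every (a_1,…,a_d)-fractionally balanced d-partite hypergraph contains a matching of size ⌈(min_{1 ≤ t ≤ d} a_t)/(d−1)⌉. -/

import Mathlib

/-- The degree of vertex `v` (on side `t`) with respect to a weight function `f`
on a `d`-partite hypergraph with sides `Fin (a t)`. -/
def degree {d : ℕ} {a : Fin d → ℕ} (f : (∀ t, Fin (a t)) → ℝ)
    (t : Fin d) (v : Fin (a t)) : ℝ :=
  ∑ e : ∀ t, Fin (a t), if e t = v then f e else 0

/-- `f` is a balanced weight function on the hypergraph `H`. -/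
def IsBalanced {d : ℕ} {a : Fin d → ℕ} (H : Finset (∀ t, Fin (a t)))
    (f : (∀ t, Fin (a t)) → ℝ) : Prop :=
  (∀ e, 0 ≤ f e) ∧ (∀ e, e ∉ H → f e = 0) ∧
    ∀ t : Fin d, ∀ v w : Fin (a t), degree f t v = degree f t w

/-- `H` is `(a 0, …, a (d-1))`-fractionally balanced. -/
def FracBalanced {d : ℕ} {a : Fin d → ℕ} (H : Finset (∀ t, Fin (a t))) : Prop :=
  ∃ f, IsBalanced H f ∧ f ≠ 0

/-- `M` is a matching in `H`: a set of edges of `H` any two distinct members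
of which differ in every coordinate. -/
def IsMatching {d : ℕ} {a : Fin d → ℕ} (H M : Finset (∀ t, Fin (a t))) : Prop :=
  M ⊆ H ∧ ∀ e ∈ M, ∀ f ∈ M, e ≠ f → ∀ t, e t ≠ f t

namespace FurediAux

open Finset Module

open scoped Classical

variable {d : ℕ} {a : Fin d → ℕ}

lemma sum_degree (x : (∀ t, Fin (a t)) → ℝ) (t : Fin d) :
    ∑ v, degree x t v = ∑ e, x e := by
  unfold degree
  rw [Finset.sum_comm]
  refine Finset.sum_congr rfl fun e _ => ?_
  simp

lemma degree_add_smul (x z : (∀ t, Fin (a t)) → ℝ) (c : ℝ) (t : Fin d) (v : Fin (a t)) :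
    degree (fun e => x e + c * z e) t v = degree x t v + c * degree z t v := by
  unfold degree
  rw [Finset.mul_sum, ← Finset.sum_add_distrib]
  refine Finset.sum_congr rfl fun e _ => ?_
  split_ifs <;> simp

lemma degree_neg (z : (∀ t, Fin (a t)) → ℝ) (t : Fin d) (v : Fin (a t)) :
    degree (fun e => -(z e)) t v = - degree z t v := by
  unfold degree
  rw [← Finset.sum_neg_distrib]
  refine Finset.sum_congr rfl fun e _ => ?_
  split_ifs <;> simp

lemma degree_nonneg {x : (∀ t, Fin (a t)) → ℝ} (hx : ∀ e, 0 ≤ x e) (t : Fin d) (v : Fin (a t)) :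
    0 ≤ degree x t v := by
  apply Finset.sum_nonneg
  intro e _
  split_ifs
  · exact hx e
  · exact le_refl 0

lemma le_degree {x : (∀ t, Fin (a t)) → ℝ} (hx : ∀ e, 0 ≤ x e) (e : ∀ t, Fin (a t)) (t : Fin d) :
    x e ≤ degree x t (e t) := by
  unfold degree
  have := Finset.single_le_sum (f := fun e' => if e' t = e t then x e' else 0)
    (fun e' _ => by split_ifs; exacts [hx e', le_refl 0]) (Finset.mem_univ e)
  simpa using this

lemma degree_mono {x y : (∀ t, Fin (a t)) → ℝ} (h : ∀ e, x e ≤ y e) (t : Fin d) (v : Fin (a t)) :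
    degree x t v ≤ degree y t v := by
  apply Finset.sum_le_sum
  intro e _
  split_ifs
  · exact h e
  · exact le_refl 0

/-- A fractional matching on `H`. -/

def Feas (H : Finset (∀ t, Fin (a t))) (x : (∀ t, Fin (a t)) → ℝ) : Prop :=
  (∀ e, 0 ≤ x e) ∧ (∀ e, e ∉ H → x e = 0) ∧ ∀ t v, degree x t v ≤ 1

/-- The set of tight vertices. -/

noncomputable def Tset (x : (∀ t, Fin (a t)) → ℝ) : Finset (Σ t : Fin d, Fin (a t)) :=
  Finset.univ.filter fun p => degree x p.1 p.2 = 1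

/-- The support. -/

noncomputable def Sset (x : (∀ t, Fin (a t)) → ℝ) : Finset (∀ t, Fin (a t)) :=
  Finset.univ.filter fun e => x e ≠ 0

lemma mem_Tset {x : (∀ t, Fin (a t)) → ℝ} {p : Σ t : Fin d, Fin (a t)} :
    p ∈ Tset x ↔ degree x p.1 p.2 = 1 := by simp [Tset]

lemma mem_Sset {x : (∀ t, Fin (a t)) → ℝ} {e : ∀ t, Fin (a t)} :
    e ∈ Sset x ↔ x e ≠ 0 := by simp [Sset]

lemma no_kernel_dir (H : Finset (∀ t, Fin (a t))) (s : ℝ) (x z : (∀ t, Fin (a t)) → ℝ)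
    (hxF : Feas H x) (hxs : s ≤ ∑ e, x e)
    (hz0 : z ≠ 0) (hzsupp : ∀ e, x e = 0 → z e = 0)
    (hzker : ∀ t v, degree x t v = 1 → degree z t v = 0)
    (hzS : 0 ≤ ∑ e, z e)
    (hA : ∀ e, x e ≠ 0 → ∃ t, degree x t (e t) = 1) :
    ∃ y, Feas H y ∧ s ≤ ∑ e, y e ∧ Tset x ⊆ Tset y ∧
      (Tset x ⊂ Tset y ∨ Sset y ⊂ Sset x) := by
  obtain ⟨hx0, hxH, hxdeg⟩ := hxF
  set C1 : Finset (∀ t, Fin (a t)) := (Sset x).filter (fun e => z e < 0) with hC1def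
  have hC1ne : C1.Nonempty := by
    by_contra hemp
    rw [Finset.not_nonempty_iff_eq_empty] at hemp
    have hznn : ∀ e, 0 ≤ z e := by
      intro e
      by_contra hneg
      push_neg at hneg
      have hxe : x e ≠ 0 := fun h => (ne_of_lt hneg) (hzsupp e h)
      have : e ∈ C1 := by
        rw [hC1def, mem_filter, mem_Sset]
        exact ⟨hxe, hneg⟩
      rw [hemp] at this
      exact absurd this (Finset.notMem_empty e)
    obtain ⟨e₀, he₀⟩ : ∃ e₀, z e₀ ≠ 0 := by
      by_contra h; push_neg at h; exact hz0 (funext h)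
    have hx₀ : x e₀ ≠ 0 := fun h => he₀ (hzsupp e₀ h)
    obtain ⟨t, ht⟩ := hA e₀ hx₀
    have h1 : degree z t (e₀ t) = 0 := hzker _ _ ht
    have h2 : z e₀ ≤ degree z t (e₀ t) := le_degree hznn e₀ t
    have h3 : 0 < z e₀ := lt_of_le_of_ne (hznn e₀) (Ne.symm he₀)
    linarith
  have hC1S : ∀ e ∈ C1, 0 < x e ∧ z e < 0 := by
    intro e he
    rw [hC1def, mem_filter, mem_Sset] at he
    exact ⟨lt_of_le_of_ne (hx0 e) (Ne.symm he.1), he.2⟩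
  set f1 : (∀ t, Fin (a t)) → ℝ := fun e => x e / (-z e) with hf1def
  set e1 : ℝ := C1.inf' hC1ne f1 with he1def
  have he1pos : 0 < e1 := by
    rw [he1def, Finset.lt_inf'_iff]
    intro e he
    obtain ⟨h1, h2⟩ := hC1S e he
    exact div_pos h1 (by linarith)
  set C2 : Finset (Σ t : Fin d, Fin (a t)) :=
    Finset.univ.filter (fun p => 0 < degree z p.1 p.2) with hC2def
  have hC2mem : ∀ p ∈ C2, 0 < degree z p.1 p.2 := by
    intro p hp; rw [hC2def, mem_filter] at hp; exact hp.2
  have hC2lt : ∀ p ∈ C2, degree x p.1 p.2 < 1 := by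
    intro p hp
    refine lt_of_le_of_ne (hxdeg p.1 p.2) (fun h => ?_)
    have := hzker p.1 p.2 h
    have := hC2mem p hp
    linarith
  set f2 : (Σ t : Fin d, Fin (a t)) → ℝ :=
    fun p => (1 - degree x p.1 p.2) / degree z p.1 p.2 with hf2def
  set ε : ℝ := if h : C2.Nonempty then min e1 (C2.inf' h f2) else e1 with hεdef
  have hεpos : 0 < ε := by
    rw [hεdef]
    split_ifs with h
    · refine lt_min he1pos ?_
      rw [Finset.lt_inf'_iff]
      intro p hp
      exact div_pos (by linarith [hC2lt p hp]) (hC2mem p hp)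
    · exact he1pos
  have hεle1 : ε ≤ e1 := by
    rw [hεdef]; split_ifs with h
    · exact min_le_left _ _
    · exact le_refl _
  have hεle2 : ∀ p ∈ C2, ε ≤ f2 p := by
    intro p hp
    rw [hεdef, dif_pos ⟨p, hp⟩]
    exact le_trans (min_le_right _ _) (Finset.inf'_le _ hp)
  set y : (∀ t, Fin (a t)) → ℝ := fun e => x e + ε * z e with hydef
  have hy0 : ∀ e, 0 ≤ y e := by
    intro e
    rcases le_or_gt 0 (z e) with hz | hz
    · have : 0 ≤ ε * z e := mul_nonneg hεpos.le hz
      simp only [hydef]; linarith [hx0 e]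
    · have hxe : x e ≠ 0 := fun h => (ne_of_lt hz) (hzsupp e h)
      have heC1 : e ∈ C1 := by rw [hC1def, mem_filter, mem_Sset]; exact ⟨hxe, hz⟩
      have : ε ≤ x e / (-z e) := le_trans hεle1 (Finset.inf'_le _ heC1)
      rw [le_div_iff₀ (by linarith)] at this
      simp only [hydef]
      nlinarith
  have hyH : ∀ e, e ∉ H → y e = 0 := by
    intro e he
    have hx := hxH e he
    have hz := hzsupp e hx
    simp [hydef, hx, hz]
  have hydeg : ∀ t v, degree y t v = degree x t v + ε * degree z t v := by
    intro t v; rw [hydef]; exact degree_add_smul x z ε t v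
  have hydeg1 : ∀ t v, degree y t v ≤ 1 := by
    intro t v
    rw [hydeg]
    rcases le_or_gt (degree z t v) 0 with hdz | hdz
    · nlinarith [hxdeg t v]
    · have hpC2 : (⟨t, v⟩ : Σ t : Fin d, Fin (a t)) ∈ C2 := by
        rw [hC2def, mem_filter]; exact ⟨mem_univ _, hdz⟩
      have := hεle2 _ hpC2
      rw [hf2def] at this
      dsimp at this
      rw [le_div_iff₀ hdz] at this
      linarith
  have hyF : Feas H y := ⟨hy0, hyH, hydeg1⟩
  have hys : s ≤ ∑ e, y e := by
    have : ∑ e, y e = (∑ e, x e) + ε * ∑ e, z e := by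
      rw [hydef, Finset.mul_sum, ← Finset.sum_add_distrib]
    rw [this]
    nlinarith
  have hTsub : Tset x ⊆ Tset y := by
    intro p hp
    rw [mem_Tset] at hp ⊢
    rw [hydeg, hp, hzker p.1 p.2 hp]
    ring
  have shrink : ε = e1 → Sset y ⊂ Sset x := by
    intro hεeq
    obtain ⟨estar, hestar, heq⟩ := Finset.exists_mem_eq_inf' hC1ne f1
    obtain ⟨hxs', hzs'⟩ := hC1S estar hestar
    have hystar : y estar = 0 := by
      rw [hydef]
      dsimp only
      rw [hεeq, he1def, heq, hf1def]
      have hzne : z estar ≠ 0 := ne_of_lt hzs'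
      have h2 : x estar / -z estar * -z estar = x estar :=
        div_mul_cancel₀ _ (neg_ne_zero.2 hzne)
      have h3 : x estar / -z estar * z estar = - x estar := by
        calc x estar / -z estar * z estar = -(x estar / -z estar * -z estar) := by ring
        _ = - x estar := by rw [h2]
      linarith
    have hsub : Sset y ⊆ Sset x := by
      intro e he
      rw [mem_Sset] at he ⊢
      intro hx
      exact he (by simp [hydef, hx, hzsupp e hx])
    rw [Finset.ssubset_iff_of_subset hsub]
    refine ⟨estar, ?_, ?_⟩
    · rw [hC1def] at hestar; exact (mem_filter.1 hestar).1
    · rw [mem_Sset]; simpa using hystar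
  by_cases hc2 : C2.Nonempty
  · rcases le_total e1 (C2.inf' hc2 f2) with hle | hle
    · have hεeq : ε = e1 := by rw [hεdef, dif_pos hc2]; exact min_eq_left hle
      exact ⟨y, hyF, hys, hTsub, Or.inr (shrink hεeq)⟩
    · have hεeq : ε = C2.inf' hc2 f2 := by rw [hεdef, dif_pos hc2]; exact min_eq_right hle
      obtain ⟨pstar, hpstar, hpeq⟩ := Finset.exists_mem_eq_inf' hc2 f2
      have hdz := hC2mem pstar hpstar
      have hdeg1 : degree y pstar.1 pstar.2 = 1 := by
        rw [hydeg, hεeq, hpeq, hf2def]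
        dsimp only
        rw [div_mul_cancel₀ _ (ne_of_gt hdz)]
        ring
      have hnotin : pstar ∉ Tset x := by
        rw [mem_Tset]
        exact ne_of_lt (hC2lt pstar hpstar)
      refine ⟨y, hyF, hys, hTsub, Or.inl ?_⟩
      rw [Finset.ssubset_iff_of_subset hTsub]
      exact ⟨pstar, mem_Tset.2 hdeg1, hnotin⟩
  · have hεeq : ε = e1 := by rw [hεdef, dif_neg hc2]
    exact ⟨y, hyF, hys, hTsub, Or.inr (shrink hεeq)⟩

lemma degree_add (x z : (∀ t, Fin (a t)) → ℝ) (t : Fin d) (v : Fin (a t)) :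
    degree (fun e => x e + z e) t v = degree x t v + degree z t v := by
  unfold degree
  rw [← Finset.sum_add_distrib]
  refine Finset.sum_congr rfl fun e _ => ?_
  split_ifs <;> simp

lemma degree_single (e : ∀ t, Fin (a t)) (g : ℝ) (t : Fin d) (v : Fin (a t)) :
    degree (fun e' => if e' = e then g else 0) t v = if e t = v then g else 0 := by
  unfold degree
  rw [Finset.sum_congr rfl (fun e' _ => show (if e' t = v then (if e' = e then g else 0) else 0)
      = (if e' = e then (if e t = v then g else 0) else 0) by
    split_ifs with h1 h2 h3 h4 <;> first | rfl | (subst_vars; simp_all))]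
  simp

lemma sum_single (e : ∀ t, Fin (a t)) (g : ℝ) :
    ∑ e' : ∀ t, Fin (a t), (if e' = e then g else 0) = g := by
  simp

/-- Claim A: if no feasible solution of value ≥ s has a coordinate ≥ 1/(d-1), and x maximizes
the number of tight vertices among feasible solutions of value ≥ s, then every support edge
of x has a tight vertex. -/

lemma claimA (hd : 2 ≤ d) (H : Finset (∀ t, Fin (a t))) (s : ℝ) (x : (∀ t, Fin (a t)) → ℝ)
    (hxF : Feas H x) (hxs : s ≤ ∑ e, x e)
    (hcon : ∀ y, Feas H y → s ≤ ∑ e, y e → ∀ e ∈ H, y e < 1 / ((d : ℝ) - 1))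
    (hmax : ∀ y, Feas H y → s ≤ ∑ e, y e → (Tset y).card ≤ (Tset x).card) :
    ∀ e, x e ≠ 0 → ∃ t, degree x t (e t) = 1 := by
  obtain ⟨hx0, hxH, hxdeg⟩ := hxF
  intro e he
  by_contra hAn
  push_neg at hAn
  have heH : e ∈ H := by
    by_contra h
    exact he (hxH e h)
  have hdlt : ∀ t, degree x t (e t) < 1 := fun t => lt_of_le_of_ne (hxdeg t (e t)) (hAn t)
  have hd0 : 0 < d := by omega
  have : Nonempty (Fin d) := ⟨⟨0, hd0⟩⟩
  have huniv : (Finset.univ : Finset (Fin d)).Nonempty := Finset.univ_nonempty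
  set r : ℝ := Finset.univ.inf' huniv (fun t => 1 - degree x t (e t)) with hrdef
  have hrle : ∀ t, r ≤ 1 - degree x t (e t) := fun t => Finset.inf'_le _ (mem_univ t)
  have hrpos : 0 < r := by
    rw [hrdef, Finset.lt_inf'_iff]
    intro t _
    linarith [hdlt t]
  have hgap : 0 < 1 / ((d : ℝ) - 1) - x e := by
    have := hcon x ⟨hx0, hxH, hxdeg⟩ hxs e heH
    linarith
  set g : ℝ := min r (1 / ((d : ℝ) - 1) - x e) with hgdef
  have hgpos : 0 < g := lt_min hrpos hgap
  have hgler : g ≤ r := min_le_left _ _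
  set y : (∀ t, Fin (a t)) → ℝ := fun e' => x e' + (if e' = e then g else 0) with hydef
  have hydeg : ∀ t v, degree y t v = degree x t v + (if e t = v then g else 0) := by
    intro t v
    rw [hydef, degree_add, degree_single]
  have hyF : Feas H y := by
    refine ⟨fun e' => ?_, fun e' he' => ?_, fun t v => ?_⟩
    · show (0:ℝ) ≤ x e' + if e' = e then g else 0
      split_ifs <;> [linarith [hx0 e']; simpa using hx0 e']
    · have hxe' := hxH e' he'
      have hne : e' ≠ e := fun h => he' (h ▸ heH)
      simp [hydef, hxe', hne]
    · rw [hydeg]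
      split_ifs with hv
      · subst hv
        linarith [hrle t]
      · simpa using hxdeg t v
  have hys : s ≤ ∑ e', y e' := by
    have : ∑ e', y e' = (∑ e', x e') + g := by
      rw [hydef]
      rw [Finset.sum_add_distrib, sum_single]
    rw [this]; linarith
  rcases le_or_gt (1 / ((d : ℝ) - 1) - x e) r with hcase | hcase
  · -- g = gap; y e = 1/(d-1): contradict hcon
    have hge : g = 1 / ((d : ℝ) - 1) - x e := min_eq_right hcase
    have hye : y e = 1 / ((d : ℝ) - 1) := by
      show x e + (if e = e then g else 0) = _
      rw [if_pos rfl, hge]; ring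
    have := hcon y hyF hys e heH
    rw [hye] at this
    exact lt_irrefl _ this
  · -- g = r; new tight vertex
    have hgr : g = r := min_eq_left (le_of_lt hcase)
    obtain ⟨t₀, _, ht₀⟩ := Finset.exists_mem_eq_inf' huniv (fun t => 1 - degree x t (e t))
    have hty : degree y t₀ (e t₀) = 1 := by
      rw [hydeg, if_pos rfl, hgr, hrdef, ht₀]; ring
    have hsub : Tset x ⊆ Tset y := by
      intro p hp
      rw [mem_Tset] at hp ⊢
      rw [hydeg]
      have : ¬ (e p.1 = p.2) := by
        intro hEq
        rw [← hEq] at hp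
        exact absurd hp (ne_of_lt (hdlt p.1))
      rw [if_neg this, hp]; ring
    have hss : Tset x ⊂ Tset y := by
      rw [Finset.ssubset_iff_of_subset hsub]
      refine ⟨⟨t₀, e t₀⟩, mem_Tset.2 hty, ?_⟩
      rw [mem_Tset]
      exact ne_of_lt (hdlt t₀)
    have := hmax y hyF hys
    have := Finset.card_lt_card hss
    omega

/-- Summing a function supported on `S` over everything equals the subtype sum. -/

lemma sum_subtype_of_supp (S : Finset (∀ t, Fin (a t))) (F : (∀ t, Fin (a t)) → ℝ)
    (h : ∀ e ∉ S, F e = 0) : ∑ e, F e = ∑ e : ↥S, F e := by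
  rw [Finset.sum_coe_sort S F]
  exact (Finset.sum_subset (Finset.subset_univ S) (fun e _ he => h e he)).symm

/-- The number of tight vertices is at most the support size, and if they are equal then
every support edge has all of its vertices tight. -/

lemma tight_card_le (hd : 2 ≤ d) (x : (∀ t, Fin (a t)) → ℝ)
    (hx0 : ∀ e, 0 ≤ x e)
    (hxsmall : ∀ e, x e ≠ 0 → x e < 1 / ((d : ℝ) - 1))
    (hA : ∀ e, x e ≠ 0 → ∃ t, degree x t (e t) = 1) :
    (Tset x).card ≤ (Sset x).card ∧
      ((Tset x).card = (Sset x).card →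
        ∀ e, x e ≠ 0 → ∀ t, degree x t (e t) = 1) := by
  have hd0 : 0 < d := by omega
  have hD : (0:ℝ) < (d:ℝ) - 1 := by
    have : (2:ℝ) ≤ (d:ℝ) := by exact_mod_cast hd
    linarith
  -- every tight vertex has at least d support edges
  have hfiber : ∀ p ∈ Tset x, d ≤ ((Sset x).filter fun e => e p.1 = p.2).card := by
    intro p hp
    rw [mem_Tset] at hp
    set F := (Sset x).filter fun e => e p.1 = p.2 with hF
    have hsum : ∑ e ∈ F, x e = 1 := by
      rw [← hp]
      unfold degree
      rw [← Finset.sum_filter]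
      apply Finset.sum_subset
      · intro e he
        rw [hF, mem_filter, mem_Sset] at he
        exact mem_filter.2 ⟨mem_univ _, he.2⟩
      · intro e he hne
        by_contra hxe
        apply hne
        rw [hF, mem_filter, mem_Sset]
        exact ⟨hxe, (mem_filter.1 he).2⟩
    have hFne : F.Nonempty := by
      rcases Finset.eq_empty_or_nonempty F with h | h
      · rw [h] at hsum; simp at hsum
      · exact h
    have hlt : (1:ℝ) < F.card * (1 / ((d:ℝ) - 1)) := by
      calc (1:ℝ) = ∑ e ∈ F, x e := hsum.symm
      _ < ∑ _e ∈ F, (1 / ((d:ℝ) - 1)) := by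
          apply Finset.sum_lt_sum_of_nonempty hFne
          intro e he
          apply hxsmall
          rw [hF, mem_filter, mem_Sset] at he
          exact he.1
      _ = F.card * (1 / ((d:ℝ) - 1)) := by rw [Finset.sum_const, nsmul_eq_mul]
    have hcast : (d:ℝ) - 1 < F.card := by
      rw [mul_one_div, lt_div_iff₀ hD] at hlt
      linarith
    have : d < F.card + 1 := by
      have : (d:ℝ) < (F.card:ℝ) + 1 := by linarith
      exact_mod_cast this
    omega
  -- double counting
  have hcount : ∑ e ∈ Sset x, (Finset.univ.filter fun t => degree x t (e t) = 1).card
      = ∑ p ∈ Tset x, ((Sset x).filter fun e => e p.1 = p.2).card := by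
    have per_e : ∀ e : ∀ t, Fin (a t),
        (Finset.univ.filter fun t => degree x t (e t) = 1).card
          = ∑ p ∈ Tset x, (if e p.1 = p.2 then 1 else 0) := by
      intro e
      rw [Finset.card_filter]
      rw [Tset, Finset.sum_filter]
      rw [← Finset.univ_sigma_univ, Finset.sum_sigma]
      refine Finset.sum_congr rfl fun t _ => ?_
      have : ∀ v : Fin (a t),
          (if degree x t v = 1 then (if e t = v then (1:ℕ) else 0) else 0)
            = (if e t = v then (if degree x t v = 1 then (1:ℕ) else 0) else 0) := by
        intro v; split_ifs <;> rfl
      rw [Finset.sum_congr rfl fun v _ => this v]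
      rw [Finset.sum_ite_eq]
      simp
    rw [Finset.sum_congr rfl fun e _ => per_e e]
    rw [Finset.sum_comm]
    refine Finset.sum_congr rfl fun p _ => ?_
    rw [Finset.card_filter]
  -- the two inequalities
  have hub : ∀ e ∈ Sset x, (Finset.univ.filter fun t => degree x t (e t) = 1).card ≤ d := by
    intro e _
    calc (Finset.univ.filter fun t => degree x t (e t) = 1).card
        ≤ (Finset.univ : Finset (Fin d)).card := Finset.card_filter_le _ _
    _ = d := by simp
  have hge : d * (Tset x).card ≤ ∑ p ∈ Tset x, ((Sset x).filter fun e => e p.1 = p.2).card := by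
    calc d * (Tset x).card = (Tset x).card * d := by ring
    _ = ∑ _p ∈ Tset x, d := by rw [Finset.sum_const, smul_eq_mul]
    _ ≤ _ := Finset.sum_le_sum hfiber
  have hle : ∑ e ∈ Sset x, (Finset.univ.filter fun t => degree x t (e t) = 1).card
      ≤ d * (Sset x).card := by
    calc ∑ e ∈ Sset x, (Finset.univ.filter fun t => degree x t (e t) = 1).card
        ≤ ∑ _e ∈ Sset x, d := Finset.sum_le_sum hub
    _ = (Sset x).card * d := by rw [Finset.sum_const, smul_eq_mul]
    _ = d * (Sset x).card := by ring
  have hTS : (Tset x).card ≤ (Sset x).card := by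
    have h1 : d * (Tset x).card ≤ d * (Sset x).card := by
      calc d * (Tset x).card ≤ _ := hge
      _ = _ := hcount.symm
      _ ≤ d * (Sset x).card := hle
    exact Nat.le_of_mul_le_mul_left h1 hd0
  refine ⟨hTS, fun heq => ?_⟩
  -- equality case: all k e = d
  have hall : ∀ e ∈ Sset x, (Finset.univ.filter fun t => degree x t (e t) = 1).card = d := by
    by_contra hne
    push_neg at hne
    obtain ⟨e₀, he₀, hne₀⟩ := hne
    have hlt₀ : (Finset.univ.filter fun t => degree x t (e₀ t) = 1).card < d :=
      lt_of_le_of_ne (hub e₀ he₀) hne₀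
    have : ∑ e ∈ Sset x, (Finset.univ.filter fun t => degree x t (e t) = 1).card
        < d * (Sset x).card := by
      calc ∑ e ∈ Sset x, (Finset.univ.filter fun t => degree x t (e t) = 1).card
          < ∑ _e ∈ Sset x, d := Finset.sum_lt_sum hub ⟨e₀, he₀, hlt₀⟩
      _ = (Sset x).card * d := by rw [Finset.sum_const, smul_eq_mul]
      _ = d * (Sset x).card := by ring
    rw [hcount] at this
    have h2 := lt_of_le_of_lt hge this
    rw [heq] at h2
    exact lt_irrefl _ h2
  intro e he t
  have hmem : e ∈ Sset x := mem_Sset.2 he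
  have hcard := hall e hmem
  have huniv : (Finset.univ.filter fun t => degree x t (e t) = 1) = Finset.univ := by
    apply Finset.eq_univ_of_card
    rw [hcard]; simp
  have : t ∈ Finset.univ.filter fun t => degree x t (e t) = 1 := by
    rw [huniv]; exact mem_univ t
  exact (mem_filter.1 this).2

/-- The incidence linear map from support-indexed vectors to tight-vertex degrees. -/

noncomputable def Lmap (x : (∀ t, Fin (a t)) → ℝ) :
    (↥(Sset x) → ℝ) →ₗ[ℝ] (↥(Tset x) → ℝ) where
  toFun z p := ∑ e : ↥(Sset x), if (e : ∀ t, Fin (a t)) p.1.1 = p.1.2 then z e else 0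
  map_add' z w := by
    funext p
    simp only [Pi.add_apply]
    rw [← Finset.sum_add_distrib]
    exact Finset.sum_congr rfl fun e _ => by split_ifs <;> simp
  map_smul' c z := by
    funext p
    simp only [Pi.smul_apply, smul_eq_mul, RingHom.id_apply]
    rw [Finset.mul_sum]
    exact Finset.sum_congr rfl fun e _ => by split_ifs <;> simp

lemma exists_kernel (x : (∀ t, Fin (a t)) → ℝ) (hd : 2 ≤ d)
    (hxsmall : ∀ e, x e ≠ 0 → x e < 1 / ((d : ℝ) - 1))
    (hTS : (Tset x).card ≤ (Sset x).card)
    (hAll : (Tset x).card = (Sset x).card → ∀ e, x e ≠ 0 → ∀ t, degree x t (e t) = 1)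
    (hSne : (Sset x).Nonempty) :
    ∃ z : ↥(Sset x) → ℝ, z ≠ 0 ∧ Lmap x z = 0 := by
  have hfinS : finrank ℝ (↥(Sset x) → ℝ) = (Sset x).card := by
    rw [Module.finrank_fintype_fun_eq_card, Fintype.card_coe]
  have hfinT : finrank ℝ (↥(Tset x) → ℝ) = (Tset x).card := by
    rw [Module.finrank_fintype_fun_eq_card, Fintype.card_coe]
  have hker : LinearMap.ker (Lmap x) ≠ ⊥ := by
    rcases lt_or_eq_of_le hTS with hlt | heq
    · -- fewer tight vertices than support edges
      apply LinearMap.ker_ne_bot_of_finrank_lt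
      rw [hfinS, hfinT]
      exact hlt
    · -- equality case: use the nontrivial dependency
      have hall := hAll heq
      set t₁ : Fin d := ⟨0, by omega⟩ with ht₁
      set t₂ : Fin d := ⟨1, by omega⟩ with ht₂
      have ht12 : t₁ ≠ t₂ := by
        simp [ht₁, ht₂, Fin.ext_iff]
      -- the functional c
      set c : (↥(Tset x) → ℝ) →ₗ[ℝ] ℝ :=
        { toFun := fun w => (∑ p : ↥(Tset x), if p.1.1 = t₁ then w p else 0)
            - (∑ p : ↥(Tset x), if p.1.1 = t₂ then w p else 0)
          map_add' := by
            intro w u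
            have h : ∀ t' : Fin d,
                ∑ p : ↥(Tset x), (if p.1.1 = t' then (w p + u p) else 0)
                  = (∑ p : ↥(Tset x), if p.1.1 = t' then w p else 0)
                    + ∑ p : ↥(Tset x), if p.1.1 = t' then u p else 0 := by
              intro t'
              rw [← Finset.sum_add_distrib]
              exact Finset.sum_congr rfl fun p _ => by split_ifs <;> simp
            simp only [Pi.add_apply]
            rw [h t₁, h t₂]
            ring
          map_smul' := by
            intro r w
            have h : ∀ t' : Fin d,
                ∑ p : ↥(Tset x), (if p.1.1 = t' then r * w p else 0)
                  = r * ∑ p : ↥(Tset x), if p.1.1 = t' then w p else 0 := by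
              intro t'
              rw [Finset.mul_sum]
              exact Finset.sum_congr rfl fun p _ => by split_ifs <;> simp
            simp only [Pi.smul_apply, smul_eq_mul, RingHom.id_apply]
            rw [h t₁, h t₂]
            ring } with hc
      -- key computation: the t'-side sum of L z is the total sum
      have keyt : ∀ (t' : Fin d) (z : ↥(Sset x) → ℝ),
          (∑ p : ↥(Tset x), if p.1.1 = t' then Lmap x z p else 0)
            = ∑ e : ↥(Sset x), z e := by
        intro t' z
        have step1 : (∑ p : ↥(Tset x), if p.1.1 = t' then Lmap x z p else 0)
            = ∑ p : ↥(Tset x), ∑ e : ↥(Sset x),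
                (if p.1.1 = t' ∧ (e : ∀ t, Fin (a t)) p.1.1 = p.1.2 then z e else 0) := by
          refine Finset.sum_congr rfl fun p _ => ?_
          by_cases h : p.1.1 = t'
          · rw [if_pos h]
            show Lmap x z p = _
            show (∑ e : ↥(Sset x), if (e : ∀ t, Fin (a t)) p.1.1 = p.1.2 then z e else 0) = _
            refine Finset.sum_congr rfl fun e _ => ?_
            by_cases h2 : (e : ∀ t, Fin (a t)) p.1.1 = p.1.2
            · rw [if_pos h2, if_pos ⟨h, h2⟩]
            · rw [if_neg h2, if_neg (fun hc => h2 hc.2)]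
          · rw [if_neg h]
            symm
            apply Finset.sum_eq_zero
            intro e _
            rw [if_neg (fun hc => h hc.1)]
        rw [step1, Finset.sum_comm]
        refine Finset.sum_congr rfl fun e _ => ?_
        -- the unique tight vertex ⟨t', e t'⟩
        have hmem : (⟨t', (e : ∀ t, Fin (a t)) t'⟩ : Σ t : Fin d, Fin (a t)) ∈ Tset x := by
          rw [mem_Tset]
          exact hall (e : ∀ t, Fin (a t)) (mem_Sset.1 e.2) t'
        rw [Finset.sum_eq_single_of_mem
          (⟨⟨t', (e : ∀ t, Fin (a t)) t'⟩, hmem⟩ : ↥(Tset x)) (Finset.mem_univ _)]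
        · rw [if_pos ⟨rfl, rfl⟩]
        · intro b _ hb
          apply if_neg
          rintro ⟨h1, h2⟩
          apply hb
          apply Subtype.ext
          show (b : Σ t : Fin d, Fin (a t)) = ⟨t', (e : ∀ t, Fin (a t)) t'⟩
          obtain ⟨⟨tb, vb⟩, hbmem⟩ := b
          dsimp only at h1 h2 ⊢
          subst h1
          rw [h2]
      have hcomp : ∀ z, c (Lmap x z) = 0 := by
        intro z
        show (∑ p : ↥(Tset x), if p.1.1 = t₁ then Lmap x z p else 0)
            - (∑ p : ↥(Tset x), if p.1.1 = t₂ then Lmap x z p else 0) = 0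
        rw [keyt t₁ z, keyt t₂ z, sub_self]
      -- c is nonzero
      obtain ⟨e₁, he₁⟩ := hSne
      have hmem₁ : (⟨t₁, e₁ t₁⟩ : Σ t : Fin d, Fin (a t)) ∈ Tset x := by
        rw [mem_Tset]
        exact hall e₁ (mem_Sset.1 he₁) t₁
      set q₀ : ↥(Tset x) := ⟨⟨t₁, e₁ t₁⟩, hmem₁⟩ with hq₀
      set w₀ : ↥(Tset x) → ℝ := fun p => if p = q₀ then 1 else 0 with hw₀
      have hcw₀ : c w₀ = 1 := by
        show (∑ p : ↥(Tset x), if p.1.1 = t₁ then w₀ p else 0)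
            - (∑ p : ↥(Tset x), if p.1.1 = t₂ then w₀ p else 0) = 1
        have h1 : (∑ p : ↥(Tset x), if p.1.1 = t₁ then w₀ p else 0) = 1 := by
          rw [Finset.sum_eq_single_of_mem q₀ (Finset.mem_univ _)]
          · rw [hw₀]; simp; rfl
          · intro b _ hb
            rw [hw₀]
            dsimp only
            rw [if_neg hb]
            split_ifs <;> rfl
        have h2 : (∑ p : ↥(Tset x), if p.1.1 = t₂ then w₀ p else 0) = 0 := by
          apply Finset.sum_eq_zero
          intro p _
          rw [hw₀]
          dsimp only
          split_ifs with hp1 hp2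
          · subst hp2
            exact absurd hp1 ht12
          · rfl
          · rfl
        rw [h1, h2, sub_zero]
      -- codRestrict into ker c
      have hrange : ∀ z, Lmap x z ∈ LinearMap.ker c := fun z => LinearMap.mem_ker.2 (hcomp z)
      set L' : (↥(Sset x) → ℝ) →ₗ[ℝ] ↥(LinearMap.ker c) :=
        (Lmap x).codRestrict (LinearMap.ker c) hrange with hL'
      have hkerL' : LinearMap.ker L' = LinearMap.ker (Lmap x) := by
        rw [hL']
        exact LinearMap.ker_codRestrict _ _ _
      rw [← hkerL']
      apply LinearMap.ker_ne_bot_of_finrank_lt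
      rw [hfinS]
      -- finrank of ker c = T.card - 1 < S.card
      have hrankc : finrank ℝ (LinearMap.range c) = 1 := by
        have htop : LinearMap.range c = ⊤ := by
          rw [LinearMap.range_eq_top]
          intro r
          exact ⟨r • w₀, by rw [map_smul, hcw₀, smul_eq_mul, mul_one]⟩
        rw [htop, finrank_top, finrank_self]
      have hrn := LinearMap.finrank_range_add_finrank_ker c
      rw [hfinT, hrankc] at hrn
      have hT1 : 0 < (Tset x).card := by
        rw [heq]
        exact Finset.card_pos.2 ⟨e₁, he₁⟩
      omega
  rw [Submodule.ne_bot_iff] at hker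
  obtain ⟨z, hz, hz0⟩ := hker
  exact ⟨z, hz0, LinearMap.mem_ker.1 hz⟩

/-- Key lemma: any fractional matching of value ≥ s > 0 can be improved to one that
has an edge of weight at least 1/(d-1). -/
lemma key (hd : 2 ≤ d) (H : Finset (∀ t, Fin (a t))) (s : ℝ) (hs : 0 < s)
    (x₀ : (∀ t, Fin (a t)) → ℝ) (hx₀F : Feas H x₀) (hx₀s : s ≤ ∑ e, x₀ e) :
    ∃ x, Feas H x ∧ s ≤ ∑ e, x e ∧ ∃ e ∈ H, 1 / ((d : ℝ) - 1) ≤ x e := by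
  by_contra hcon
  push_neg at hcon
  set N := Fintype.card (Σ t : Fin d, Fin (a t)) with hN
  set P : ℕ → Prop := fun n => ∃ x, Feas H x ∧ s ≤ ∑ e, x e ∧ (Tset x).card = n with hP
  have hPbound : ∀ n, P n → n ≤ N := by
    rintro n ⟨x, _, _, hn⟩
    rw [← hn, hN]
    exact le_trans (Finset.card_le_univ _) (le_of_eq (Finset.card_univ))
  have hP0 : P (Tset x₀).card := ⟨x₀, hx₀F, hx₀s, rfl⟩
  set n1 := Nat.findGreatest P N with hn1
  have hPn1 : P n1 := Nat.findGreatest_spec (hPbound _ hP0) hP0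
  have hmax : ∀ y, Feas H y → s ≤ ∑ e, y e → (Tset y).card ≤ n1 := by
    intro y hyF hys
    exact Nat.le_findGreatest (hPbound _ ⟨y, hyF, hys, rfl⟩) ⟨y, hyF, hys, rfl⟩
  set Q : ℕ → Prop := fun m =>
    ∃ x, Feas H x ∧ s ≤ ∑ e, x e ∧ (Tset x).card = n1 ∧ (Sset x).card = m with hQ
  have hQex : ∃ m, Q m := by
    obtain ⟨x, h1, h2, h3⟩ := hPn1
    exact ⟨_, x, h1, h2, h3, rfl⟩
  obtain ⟨x, hxF, hxs, hxT, hxS⟩ := Nat.find_spec hQex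
  have hmin : ∀ y, Feas H y → s ≤ ∑ e, y e → (Tset y).card = n1 →
      Nat.find hQex ≤ (Sset y).card :=
    fun y h1 h2 h3 => Nat.find_le ⟨y, h1, h2, h3, rfl⟩
  have hA : ∀ e, x e ≠ 0 → ∃ t, degree x t (e t) = 1 :=
    claimA hd H s x hxF hxs hcon (fun y h1 h2 => hxT ▸ hmax y h1 h2)
  have hxsmall : ∀ e, x e ≠ 0 → x e < 1 / ((d : ℝ) - 1) := by
    intro e he
    apply hcon x hxF hxs
    by_contra h
    exact he (hxF.2.1 e h)
  have hSne : (Sset x).Nonempty := by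
    by_contra h
    rw [Finset.not_nonempty_iff_eq_empty] at h
    have hall0 : ∀ e, x e = 0 := by
      intro e
      by_contra he
      have : e ∈ Sset x := mem_Sset.2 he
      rw [h] at this
      exact absurd this (Finset.notMem_empty e)
    have : (∑ e, x e) = 0 := Finset.sum_eq_zero (fun e _ => hall0 e)
    linarith
  obtain ⟨hTS, hAllTight⟩ := tight_card_le hd x hxF.1 hxsmall hA
  obtain ⟨z, hz0, hzker⟩ := exists_kernel x hd hxsmall hTS hAllTight hSne
  -- convert z to a full vector
  set zh : (∀ t, Fin (a t)) → ℝ := fun e => if h : e ∈ Sset x then z ⟨e, h⟩ else 0 with hzh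
  have hzh_eq : ∀ e : ↥(Sset x), zh e = z e := by
    intro e
    show (if h : (e : ∀ t, Fin (a t)) ∈ Sset x then z ⟨e, h⟩ else 0) = z e
    rw [dif_pos e.2]
  have hzh_supp : ∀ e, x e = 0 → zh e = 0 := by
    intro e he
    show (if h : e ∈ Sset x then z ⟨e, h⟩ else 0) = 0
    rw [dif_neg (fun h => (mem_Sset.1 h) he)]
  have hzh_ne : zh ≠ 0 := by
    rw [Function.ne_iff] at hz0 ⊢
    obtain ⟨p, hp⟩ := hz0
    exact ⟨p, by rw [hzh_eq p]; simpa using hp⟩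
  have hzh_ker : ∀ t v, degree x t v = 1 → degree zh t v = 0 := by
    intro t v htight
    have hmem : (⟨t, v⟩ : Σ t : Fin d, Fin (a t)) ∈ Tset x := mem_Tset.2 htight
    have hLz := congrFun hzker (⟨⟨t, v⟩, hmem⟩ : ↥(Tset x))
    have heq2 : degree zh t v = Lmap x z (⟨⟨t, v⟩, hmem⟩ : ↥(Tset x)) := by
      show degree zh t v
          = ∑ e : ↥(Sset x), if (e : ∀ t, Fin (a t)) t = v then z e else 0
      unfold degree
      rw [sum_subtype_of_supp (Sset x) _ (fun e he => by
        have : zh e = 0 := by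
          show (if h : e ∈ Sset x then z ⟨e, h⟩ else 0) = 0
          rw [dif_neg he]
        rw [this]
        split_ifs <;> rfl)]
      refine Finset.sum_congr rfl fun e _ => ?_
      rw [hzh_eq e]
    rw [heq2, hLz]
    rfl
  have hzh_deg : ∀ t v, degree (fun e => -(zh e)) t v = - degree zh t v := degree_neg zh
  -- choose sign and apply the perturbation lemma
  have hfinal : ∃ y, Feas H y ∧ s ≤ ∑ e, y e ∧ Tset x ⊆ Tset y ∧
      (Tset x ⊂ Tset y ∨ Sset y ⊂ Sset x) := by
    rcases le_or_gt 0 (∑ e, zh e) with hsign | hsign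
    · exact no_kernel_dir H s x zh hxF hxs hzh_ne hzh_supp hzh_ker hsign hA
    · refine no_kernel_dir H s x (fun e => -(zh e)) hxF hxs ?_ ?_ ?_ ?_ hA
      · intro h
        apply hzh_ne
        funext e
        have := congrFun h e
        simpa using this
      · intro e he
        show -(zh e) = 0
        rw [hzh_supp e he]
        simp
      · intro t v ht
        rw [hzh_deg, hzh_ker t v ht]
        simp
      · show (0:ℝ) ≤ ∑ e, -(zh e)
        rw [Finset.sum_neg_distrib]
        linarith
  obtain ⟨y, hyF, hys, hTsub, hdisj⟩ := hfinal
  rcases hdisj with hgrow | hshrink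
  · have h1 := Finset.card_lt_card hgrow
    have h2 := hmax y hyF hys
    omega
  · have h1 : n1 ≤ (Tset y).card := by
      rw [← hxT]
      exact Finset.card_le_card hTsub
    have h2 : (Tset y).card = n1 := le_antisymm (hmax y hyF hys) h1
    have h3 := hmin y hyF hys h2
    have h4 := Finset.card_lt_card hshrink
    omega

/-- Greedy extraction of a matching from a fractional matching. -/
lemma greedy (hd : 2 ≤ d) : ∀ (k : ℕ) (H : Finset (∀ t, Fin (a t))) (x : (∀ t, Fin (a t)) → ℝ),
    Feas H x → ((k : ℝ) - 1) * ((d : ℝ) - 1) < ∑ e, x e →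
    ∃ M, IsMatching H M ∧ k ≤ M.card := by
  intro k
  induction k with
  | zero =>
    intro H x _ _
    exact ⟨∅, ⟨Finset.empty_subset _, by simp⟩, by simp⟩
  | succ k ih =>
    intro H x hx hsum
    have hD : (1:ℝ) ≤ (d:ℝ) - 1 := by
      have : (2:ℝ) ≤ (d:ℝ) := by exact_mod_cast hd
      linarith
    have hsum' : (k:ℝ) * ((d:ℝ) - 1) < ∑ e, x e := by
      push_cast at hsum
      linarith
    have h0 : 0 < ∑ e, x e := by
      have hk0 : (0:ℝ) ≤ (k:ℝ) * ((d:ℝ) - 1) := by positivity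
      linarith
    obtain ⟨y, hyF, hys, e0, he0H, he0⟩ := key hd H (∑ e, x e) h0 x hx (le_refl _)
    set H' := H.filter (fun e => ∀ t, e t ≠ e0 t) with hH'
    set x' : (∀ t, Fin (a t)) → ℝ := fun e => if e ∈ H' then y e else 0 with hx'
    have hy0 := hyF.1
    have hx'F : Feas H' x' := by
      refine ⟨fun e => ?_, fun e he => ?_, fun t v => ?_⟩
      · show (0:ℝ) ≤ if e ∈ H' then y e else 0
        split_ifs
        exacts [hy0 e, le_refl 0]
      · show (if e ∈ H' then y e else 0) = 0
        rw [if_neg he]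
      · refine le_trans (degree_mono (fun e => ?_) t v) (hyF.2.2 t v)
        show (if e ∈ H' then y e else 0) ≤ y e
        split_ifs
        exacts [le_refl _, hy0 e]
    -- weight accounting
    have hsplit : ∑ e, y e - ∑ e, x' e = ∑ e, (if e ∈ H' then 0 else y e) := by
      rw [← Finset.sum_sub_distrib]
      refine Finset.sum_congr rfl fun e _ => ?_
      show y e - (if e ∈ H' then y e else 0) = _
      split_ifs <;> ring
    have hstep1 : ∑ e, (if e ∈ H' then 0 else y e)
        ≤ ∑ e, (if ∃ t, e t = e0 t then y e else 0) := by
      refine Finset.sum_le_sum fun e _ => ?_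
      by_cases heH' : e ∈ H'
      · rw [if_pos heH']
        split_ifs
        exacts [hy0 e, le_refl 0]
      · rw [if_neg heH']
        by_cases heH : e ∈ H
        · have : ∃ t, e t = e0 t := by
            by_contra hne
            push_neg at hne
            exact heH' (Finset.mem_filter.2 ⟨heH, hne⟩)
          rw [if_pos this]
        · rw [hyF.2.1 e heH]
          split_ifs <;> exact le_refl 0
    have hpt : ∀ e, (if ∃ t, e t = e0 t then y e else 0)
        + (if e = e0 then ((d:ℝ) - 1) * y e0 else 0)
        ≤ ∑ t : Fin d, (if e t = e0 t then y e else 0) := by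
      intro e
      by_cases heq : e = e0
      · subst heq
        rw [if_pos ⟨⟨0, by omega⟩, rfl⟩, if_pos rfl]
        have hsc : ∑ t : Fin d, (if e t = e t then y e else 0) = (d:ℝ) * y e := by
          have : ∀ t : Fin d, (if e t = e t then y e else 0) = y e := fun t => if_pos rfl
          rw [Finset.sum_congr rfl fun t _ => this t, Finset.sum_const, Finset.card_univ,
            Fintype.card_fin, nsmul_eq_mul]
        rw [hsc]
        have : y e + ((d:ℝ) - 1) * y e = (d:ℝ) * y e := by ring
        linarith
      · rw [if_neg heq, add_zero]
        by_cases hex : ∃ t, e t = e0 t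
        · rw [if_pos hex]
          obtain ⟨t', ht'⟩ := hex
          have hle := Finset.single_le_sum (f := fun t : Fin d => if e t = e0 t then y e else 0)
            (fun t _ => by split_ifs; exacts [hy0 e, le_refl 0])
            (Finset.mem_univ t')
          rw [if_pos ht'] at hle
          exact hle
        · rw [if_neg hex]
          have hz : ∀ t : Fin d, (if e t = e0 t then y e else 0) = 0 :=
            fun t => if_neg (fun h => hex ⟨t, h⟩)
          rw [Finset.sum_congr rfl fun t _ => hz t, Finset.sum_const, smul_zero]
    have hstep2 : (∑ e, (if ∃ t, e t = e0 t then y e else 0)) + ((d:ℝ) - 1) * y e0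
        ≤ ∑ t : Fin d, degree y t (e0 t) := by
      have hrhs : ∑ t : Fin d, degree y t (e0 t)
          = ∑ e, ∑ t : Fin d, (if e t = e0 t then y e else 0) := by
        unfold degree
        rw [Finset.sum_comm]
      rw [hrhs, ← sum_single e0 (((d:ℝ) - 1) * y e0), ← Finset.sum_add_distrib]
      exact Finset.sum_le_sum fun e _ => hpt e
    have hstep3 : ∑ t : Fin d, degree y t (e0 t) ≤ (d:ℝ) := by
      calc ∑ t : Fin d, degree y t (e0 t) ≤ ∑ _t : Fin d, (1:ℝ) :=
            Finset.sum_le_sum fun t _ => hyF.2.2 t (e0 t)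
      _ = (d:ℝ) := by rw [Finset.sum_const, Finset.card_univ, Fintype.card_fin, nsmul_eq_mul, mul_one]
    have he0w : 1 ≤ ((d:ℝ) - 1) * y e0 := by
      have hDpos : (0:ℝ) < (d:ℝ) - 1 := by linarith
      calc (1:ℝ) = ((d:ℝ) - 1) * (1 / ((d:ℝ) - 1)) := by field_simp
      _ ≤ ((d:ℝ) - 1) * y e0 := by
          apply mul_le_mul_of_nonneg_left he0 (le_of_lt hDpos)
    have hx's : ((k:ℝ) - 1) * ((d:ℝ) - 1) < ∑ e, x' e := by
      have h1 : ∑ e, y e - ∑ e, x' e ≤ (d:ℝ) - 1 := by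
        rw [hsplit]
        calc ∑ e, (if e ∈ H' then 0 else y e)
            ≤ ∑ e, (if ∃ t, e t = e0 t then y e else 0) := hstep1
        _ ≤ (d:ℝ) - ((d:ℝ) - 1) * y e0 := by linarith
        _ ≤ (d:ℝ) - 1 := by linarith
      linarith
    obtain ⟨M', hM', hMc⟩ := ih H' x' hx'F hx's
    have hM'H' : M' ⊆ H' := hM'.1
    have he0nM' : e0 ∉ M' := by
      intro h
      have := Finset.mem_filter.1 (hM'H' h)
      exact this.2 ⟨0, by omega⟩ rfl
    refine ⟨insert e0 M', ⟨?_, ?_⟩, ?_⟩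
    · intro e he
      rcases Finset.mem_insert.1 he with he | he
      · exact he ▸ he0H
      · exact Finset.filter_subset _ _ (hM'H' he)
    · intro e he f hf hne t
      rcases Finset.mem_insert.1 he with he | he <;> rcases Finset.mem_insert.1 hf with hf | hf
      · exact absurd (he.trans hf.symm) hne
      · rw [he]
        exact fun h => (Finset.mem_filter.1 (hM'H' hf)).2 t h.symm
      · rw [hf]
        exact (Finset.mem_filter.1 (hM'H' he)).2 t
      · exact hM'.2 e he f hf hne t
    · rw [Finset.card_insert_of_notMem he0nM']
      omega

lemma degree_smul (c : ℝ) (x : (∀ t, Fin (a t)) → ℝ) (t : Fin d) (v : Fin (a t)) :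
    degree (fun e => c * x e) t v = c * degree x t v := by
  unfold degree
  rw [Finset.mul_sum]
  exact Finset.sum_congr rfl fun e _ => by split_ifs <;> simp

end FurediAux

/-- Füredi's theorem: every `(a 1, …, a d)`-fractionally balanced `d`-partite
hypergraph (`d ≥ 2`, all sides nonempty) has a matching of size
`⌈(min_t a t)/(d-1)⌉`. -/
theorem furedi (d : ℕ) (hd : 2 ≤ d) (a : Fin d → ℕ) (ha : ∀ t, 0 < a t)
    (H : Finset (∀ t, Fin (a t))) (hH : FracBalanced H) :
    ∃ M, IsMatching H M ∧ M.card = ⌈((⨅ t, a t : ℕ) : ℝ) / ((d : ℝ) - 1)⌉₊ := by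
  classical
  obtain ⟨f, ⟨hf0, hfH, hfbal⟩, hfne⟩ := hH
  set n : ℕ := ⨅ t, a t with hn
  have hd0 : 0 < d := by omega
  have hne : Nonempty (Fin d) := ⟨⟨0, hd0⟩⟩
  have hnle : ∀ t, n ≤ a t := fun t => ciInf_le (OrderBot.bddBelow _) t
  have hnpos : 0 < n := by
    obtain ⟨t₀, ht₀⟩ : ∃ t₀, a t₀ = n := by
      have hmem : n ∈ Set.range a := Nat.sInf_mem (Set.range_nonempty a)
      obtain ⟨t₀, h⟩ := hmem
      exact ⟨t₀, h⟩
    rw [← ht₀]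
    exact ha t₀
  have hD : (0:ℝ) < (d:ℝ) - 1 := by
    have : (2:ℝ) ≤ (d:ℝ) := by exact_mod_cast hd
    linarith
  set W : ℝ := ∑ e, f e with hW
  have hWpos : 0 < W := by
    obtain ⟨e₀, he₀⟩ : ∃ e₀, f e₀ ≠ 0 := by
      by_contra h
      push_neg at h
      exact hfne (funext h)
    exact Finset.sum_pos' (fun e _ => hf0 e)
      ⟨e₀, Finset.mem_univ e₀, lt_of_le_of_ne (hf0 e₀) (Ne.symm he₀)⟩
  have hdeg : ∀ (t : Fin d) (v : Fin (a t)), degree f t v = W / (a t) := by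
    intro t v
    have hsum : ∑ w : Fin (a t), degree f t w = W := FurediAux.sum_degree f t
    have hconst : ∑ w : Fin (a t), degree f t w = (a t : ℝ) * degree f t v := by
      rw [Finset.sum_congr rfl fun w _ => hfbal t w v, Finset.sum_const, Finset.card_univ,
        Fintype.card_fin, nsmul_eq_mul]
    have hat : (0:ℝ) < (a t : ℝ) := by exact_mod_cast ha t
    rw [eq_div_iff (ne_of_gt hat)]
    linear_combination hsum - hconst
  set x : (∀ t, Fin (a t)) → ℝ := fun e => ((n:ℝ) / W) * f e with hx
  have hxdeg : ∀ (t : Fin d) (v : Fin (a t)), degree x t v = (n:ℝ) / (a t : ℝ) := by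
    intro t v
    rw [hx]
    rw [FurediAux.degree_smul ((n:ℝ) / W) f t v, hdeg t v]
    have hat : ((a t : ℝ)) ≠ 0 := by
      have : (0:ℝ) < (a t : ℝ) := by exact_mod_cast ha t
      exact ne_of_gt this
    field_simp
  have hxF : FurediAux.Feas H x := by
    refine ⟨fun e => ?_, fun e he => ?_, fun t v => ?_⟩
    · exact mul_nonneg (div_nonneg (Nat.cast_nonneg n) hWpos.le) (hf0 e)
    · show ((n:ℝ) / W) * f e = 0
      rw [hfH e he, mul_zero]
    · rw [hxdeg t v]
      rw [div_le_one (by exact_mod_cast ha t)]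
      exact_mod_cast hnle t
  have hxsum : ∑ e, x e = (n:ℝ) := by
    rw [hx]
    rw [← Finset.mul_sum, ← hW]
    field_simp
  set k : ℕ := ⌈((n:ℕ) : ℝ) / ((d : ℝ) - 1)⌉₊ with hk
  have hbound : ((k:ℝ) - 1) * ((d:ℝ) - 1) < ∑ e, x e := by
    rw [hxsum]
    have hc0 : (0:ℝ) ≤ (n:ℝ) / ((d:ℝ) - 1) := div_nonneg (Nat.cast_nonneg n) hD.le
    have hceil : (k:ℝ) < (n:ℝ) / ((d:ℝ) - 1) + 1 := by
      rw [hk]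
      exact Nat.ceil_lt_add_one hc0
    have hmul : ((n:ℝ) / ((d:ℝ) - 1)) * ((d:ℝ) - 1) = (n:ℝ) :=
      div_mul_cancel₀ _ (ne_of_gt hD)
    nlinarith
  obtain ⟨M, hM, hMk⟩ := FurediAux.greedy hd k H x hxF hbound
  obtain ⟨M', hM'sub, hM'card⟩ := Finset.exists_subset_card_eq hMk
  exact ⟨M', ⟨hM'sub.trans hM.1,
    fun e he g hg hneq t => hM.2 e (hM'sub he) g (hM'sub hg) hneq t⟩, hM'card⟩
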